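/- Let D ≥ 2 be an integer, c₂ > 0 and s₀ ≥ 1 reals, and let F be a Borel probability measure on [0,∞) with mean ∫ s dF(s) = 1 and tail F((s,∞)) ≤ c₂ s^{-D/(D-1)} for all s ≥ s₀. For q > 0 and an integer h ≥ 1, define J_h(s) = e^{-qs} Σ_{i=h}^{∞} (qs)^{i}/i!. Suppose h ≥ 6, k is a real number with k ≥ D·max(c₂, 1/c₂)·s₀^{2h}·h^{h+1}, and 0 < q ≤ min(c₂, k^{-(D-1)(h+1)}). Then ∫_0^{∞} (k+s) J_h(s) dF(s) ≤ 55 D c₂ (q/h)^{1/(D-1)}. -/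

import Mathlib

open Filter Topology MeasureTheory

/-- `J q h s = e^{-qs} Σ_{i=h}^{∞} (qs)^i/i!`, the probability that a Poisson random
variable with mean `qs` is at least `h`. -/
noncomputable def jsqPoissonTail (q : ℝ) (h : ℕ) (s : ℝ) : ℝ :=
  Real.exp (-(q * s)) * ∑' i : ℕ, (q * s) ^ (h + i) / (Nat.factorial (h + i) : ℝ)

lemma jsq_summable_shift (x : ℝ) (h : ℕ) :
    Summable (fun i : ℕ => x ^ (h + i) / (Nat.factorial (h + i) : ℝ)) := by
  have := (Real.summable_pow_div_factorial x).comp_injective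
    (fun i j hij => by simpa using hij : Function.Injective (fun i : ℕ => h + i))
  simpa [Function.comp_def] using this

lemma jsq_closed (q : ℝ) (h : ℕ) (s : ℝ) :
    jsqPoissonTail q h s
      = 1 - Real.exp (-(q*s)) * ∑ i ∈ Finset.range h, (q*s)^i / (Nat.factorial i : ℝ) := by
  set x := q * s with hx
  have hsum : Summable (fun i : ℕ => x ^ i / (Nat.factorial i : ℝ)) :=
    Real.summable_pow_div_factorial x
  have hexp : Real.exp x = ∑' i : ℕ, x ^ i / (Nat.factorial i : ℝ) := by
    rw [Real.exp_eq_exp_ℝ, NormedSpace.exp_eq_tsum_div]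
  have hsplit := Summable.sum_add_tsum_nat_add (f := fun i : ℕ => x ^ i / (Nat.factorial i : ℝ)) h hsum
  have htsum : (∑' i : ℕ, x ^ (h + i) / (Nat.factorial (h + i) : ℝ))
      = Real.exp x - ∑ i ∈ Finset.range h, x ^ i / (Nat.factorial i : ℝ) := by
    have heq : (fun i : ℕ => x ^ (i + h) / (Nat.factorial (i + h) : ℝ))
        = fun i : ℕ => x ^ (h + i) / (Nat.factorial (h + i) : ℝ) := by
      funext i; rw [add_comm]
    rw [hexp, ← hsplit, ← heq]; ring
  unfold jsqPoissonTail
  rw [← hx, htsum, mul_sub, ← Real.exp_add]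
  simp

lemma jsq_nonneg (q : ℝ) (h : ℕ) (s : ℝ) (hx : 0 ≤ q * s) : 0 ≤ jsqPoissonTail q h s :=
  mul_nonneg (Real.exp_nonneg _)
    (tsum_nonneg fun i => div_nonneg (pow_nonneg hx _) (by positivity))

lemma jsq_le_one (q : ℝ) (h : ℕ) (s : ℝ) (hx : 0 ≤ q * s) : jsqPoissonTail q h s ≤ 1 := by
  rw [jsq_closed]
  have h1 : 0 ≤ Real.exp (-(q*s)) * ∑ i ∈ Finset.range h, (q*s)^i / (Nat.factorial i : ℝ) :=
    mul_nonneg (Real.exp_nonneg _) (Finset.sum_nonneg fun i _ => by positivity)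
  linarith

lemma jsq_le_pow (q : ℝ) (h : ℕ) (s : ℝ) (hx : 0 ≤ q * s) :
    jsqPoissonTail q h s ≤ (q*s)^h / (Nat.factorial h : ℝ) := by
  set x := q * s with hxx
  have key : (∑' i : ℕ, x ^ (h + i) / (Nat.factorial (h + i) : ℝ))
      ≤ x^h / (Nat.factorial h : ℝ) * Real.exp x := by
    rw [Real.exp_eq_exp_ℝ, NormedSpace.exp_eq_tsum_div, ← tsum_mul_left]
    refine Summable.tsum_le_tsum (fun i => ?_) (jsq_summable_shift x h)
      ((Real.summable_pow_div_factorial x).mul_left _)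
    have hfac : ((Nat.factorial h * Nat.factorial i : ℕ) : ℝ)
        ≤ ((Nat.factorial (h + i) : ℕ) : ℝ) := by
      exact_mod_cast Nat.le_of_dvd (Nat.factorial_pos _)
        (Nat.factorial_mul_factorial_dvd_factorial_add h i)
    have h1 : x ^ (h + i) / (Nat.factorial (h+i) : ℝ)
        ≤ x ^ (h + i) / ((Nat.factorial h * Nat.factorial i : ℕ) : ℝ) := by
      gcongr
      all_goals first | positivity | assumption
    refine h1.trans_eq ?_
    push_cast
    rw [pow_add]
    field_simp
  calc jsqPoissonTail q h s
      ≤ Real.exp (-x) * (x^h / (Nat.factorial h : ℝ) * Real.exp x) := by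
        unfold jsqPoissonTail
        exact mul_le_mul_of_nonneg_left key (Real.exp_nonneg _)
    _ = x^h / (Nat.factorial h : ℝ) := by
        rw [mul_comm (x^h / (Nat.factorial h : ℝ)), ← mul_assoc, ← Real.exp_add]
        simp

lemma jsq_le_two (q : ℝ) (h : ℕ) (s : ℝ) (hx : 0 ≤ q * s) (hx2 : q * s ≤ ((h:ℝ)+1)/2) :
    jsqPoissonTail q h s ≤ 2 * ((q*s)^h * Real.exp (-(q*s)) / (Nat.factorial h : ℝ)) := by
  set x := q * s with hxx
  have key : (∑' i : ℕ, x ^ (h + i) / (Nat.factorial (h + i) : ℝ))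
      ≤ x^h / (Nat.factorial h : ℝ) * 2 := by
    have h2 : (∑' i : ℕ, x^h / (Nat.factorial h : ℝ) * (1/2:ℝ)^i)
        = x^h / (Nat.factorial h : ℝ) * 2 := by
      rw [tsum_mul_left, tsum_geometric_two]
    rw [← h2]
    refine Summable.tsum_le_tsum (fun i => ?_) (jsq_summable_shift x h)
      (Summable.mul_left _ <| summable_geometric_of_lt_one (by norm_num) (by norm_num))
    have hfac : ((Nat.factorial h * (h+1)^i : ℕ) : ℝ) ≤ ((Nat.factorial (h + i)) : ℝ) := by
      exact_mod_cast Nat.factorial_mul_pow_le_factorial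
    have hnum : x ^ (h+i) ≤ x^h * (((h:ℝ)+1)/2)^i := by
      rw [pow_add]
      gcongr
      all_goals first | positivity | assumption
    calc x ^ (h + i) / (Nat.factorial (h+i) : ℝ)
        ≤ (x^h * (((h:ℝ)+1)/2)^i) / ((Nat.factorial h * (h+1)^i : ℕ) : ℝ) := by
          apply div_le_div₀ (by positivity) hnum (by positivity) hfac
      _ = x^h / (Nat.factorial h : ℝ) * (1/2:ℝ)^i := by
          push_cast
          rw [div_pow]
          field_simp
          rw [mul_assoc, ← mul_pow]; norm_num
  unfold jsqPoissonTail
  rw [← hxx]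
  calc Real.exp (-x) * ∑' i : ℕ, x ^ (h + i) / (Nat.factorial (h + i) : ℝ)
      ≤ Real.exp (-x) * (x^h / (Nat.factorial h : ℝ) * 2) :=
        mul_le_mul_of_nonneg_left key (Real.exp_nonneg _)
    _ = 2 * (x^h * Real.exp (-x) / (Nat.factorial h : ℝ)) := by ring


lemma exp_half_le_aux : Real.exp (1/2:ℝ) ≤ 17/10 := by
  have hx2 : Real.exp (1/2:ℝ) * Real.exp (1/2:ℝ) = Real.exp 1 := by
    rw [← Real.exp_add]; norm_num
  nlinarith [Real.exp_one_lt_d9, Real.exp_pos (1/2:ℝ), hx2]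

lemma jsq_continuous (q : ℝ) (h : ℕ) : Continuous (fun s => jsqPoissonTail q h s) := by
  have he : (fun s => jsqPoissonTail q h s)
      = fun s => 1 - Real.exp (-(q*s)) * ∑ i ∈ Finset.range h, (q*s)^i / (Nat.factorial i : ℝ) := by
    funext s; exact jsq_closed q h s
  rw [he]
  have hc : Continuous fun s : ℝ =>
      ∑ i ∈ Finset.range h, (q*s)^i / (Nat.factorial i : ℝ) := by
    apply continuous_finset_sum
    intro i _
    fun_prop
  fun_prop


lemma sq_mul_geom_le (h : ℕ) (hh : 6 ≤ h) : (h:ℝ)^2 * (17/20:ℝ)^h ≤ 25 := by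
  rcases le_or_gt h 12 with h12 | h12
  · interval_cases h <;> norm_num
  · have key : ∀ n : ℕ, 12 ≤ n → (n:ℝ)^2 * (17/20:ℝ)^n ≤ 21 := by
      intro n hn
      induction n, hn using Nat.le_induction with
      | base => norm_num
      | succ n hn ih =>
        have hn' : (12:ℝ) ≤ (n:ℝ) := by exact_mod_cast hn
        have hpos : (0:ℝ) ≤ (17/20:ℝ)^n := by positivity
        calc ((n+1:ℕ):ℝ)^2 * (17/20:ℝ)^(n+1)
            = (17/20:ℝ)^n * ((17/20:ℝ)*((n:ℝ)+1)^2) := by push_cast; rw [pow_succ]; ring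
          _ ≤ (17/20:ℝ)^n * ((n:ℝ)^2) := by
              apply mul_le_mul_of_nonneg_left _ hpos
              nlinarith
          _ = (n:ℝ)^2 * (17/20:ℝ)^n := by ring
          _ ≤ 21 := ih
    exact (key h (by omega)).trans (by norm_num)

/-- Layer cake bound for the first moment over a tail. -/
lemma tail_first_moment
    (F : MeasureTheory.Measure ℝ) [MeasureTheory.IsProbabilityMeasure F]
    {c β : ℝ} (hc : 0 < c) (hβ : 1 < β)
    {s₀ T : ℝ} (hs₀T : s₀ ≤ T) (hT : 0 < T)
    (htail : ∀ s : ℝ, s₀ ≤ s → F (Set.Ioi s) ≤ ENNReal.ofReal (c * s ^ (-β)))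
    (hint : MeasureTheory.IntegrableOn (fun s => s) (Set.Ioi T) F) :
    ∫ s in Set.Ioi T, s ∂F ≤ c * T ^ (1-β) + c * T ^ (1-β) / (β - 1) := by
  set f : ℝ → ℝ := (Set.Ioi T).indicator (fun s => s) with hf
  have hf_nn : 0 ≤ᵐ[F] f := Filter.Eventually.of_forall (fun s => by
    simp only [Pi.zero_apply, hf]
    exact Set.indicator_nonneg (fun x hx => le_of_lt (hT.trans hx)) s)
  have hf_mble : AEMeasurable f F :=
    (measurable_id.indicator measurableSet_Ioi).aemeasurable
  have key := MeasureTheory.lintegral_eq_lintegral_meas_lt F hf_nn hf_mble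
  -- lower bound for LHS
  have hsnn : 0 ≤ᵐ[F.restrict (Set.Ioi T)] fun (s:ℝ) => s :=
    MeasureTheory.ae_restrict_of_forall_mem measurableSet_Ioi (fun s hs => (hT.trans hs).le)
  have hlhs : ENNReal.ofReal (∫ s in Set.Ioi T, s ∂F) ≤ ∫⁻ s, ENNReal.ofReal (f s) ∂F := by
    rw [MeasureTheory.ofReal_integral_eq_lintegral_ofReal hint hsnn]
    calc ∫⁻ s in Set.Ioi T, ENNReal.ofReal s ∂F
        = ∫⁻ s in Set.Ioi T, ENNReal.ofReal (f s) ∂F := by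
          refine MeasureTheory.setLIntegral_congr_fun measurableSet_Ioi
            (fun s hs => ?_)
          rw [hf, Set.indicator_of_mem hs]
      _ ≤ ∫⁻ s, ENNReal.ofReal (f s) ∂F := MeasureTheory.setLIntegral_le_lintegral _ _
  -- upper bound for RHS
  have hrhs : (∫⁻ t in Set.Ioi 0, F {a : ℝ | t < f a})
      ≤ ENNReal.ofReal (c * T^(1-β)) + ENNReal.ofReal (c * T^(1-β)/(β-1)) := by
    have hsub : ∀ t : ℝ, 0 < t → {a : ℝ | t < f a} ⊆ Set.Ioi (max T t) := by
      intro t ht a ha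
      simp only [Set.mem_setOf_eq] at ha
      by_cases haT : a ∈ Set.Ioi T
      · have : f a = a := by rw [hf, Set.indicator_of_mem haT]
        rw [this] at ha
        simp only [Set.mem_Ioi, max_lt_iff]
        exact ⟨haT, ha⟩
      · rw [hf, Set.indicator_of_notMem haT] at ha
        linarith
    have hsplit : Set.Ioc 0 T ∪ Set.Ioi T = Set.Ioi (0:ℝ) := Set.Ioc_union_Ioi_eq_Ioi hT.le
    have hdisj : Disjoint (Set.Ioc (0:ℝ) T) (Set.Ioi T) := by
      rw [Set.disjoint_left]
      intro a ha ha'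
      exact absurd ha.2 (not_le.mpr ha')
    rw [← hsplit, MeasureTheory.lintegral_union measurableSet_Ioi hdisj]
    have hpiece1 : (∫⁻ t in Set.Ioc 0 T, F {a : ℝ | t < f a})
        ≤ ENNReal.ofReal (c * T^(1-β)) := by
      calc (∫⁻ t in Set.Ioc 0 T, F {a : ℝ | t < f a})
          ≤ ∫⁻ _t in Set.Ioc 0 T, ENNReal.ofReal (c * T ^ (-β)) := by
            refine MeasureTheory.setLIntegral_mono' measurableSet_Ioc (fun t ht => ?_)
            have h1 : {a : ℝ | t < f a} ⊆ Set.Ioi T := by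
              refine (hsub t ht.1).trans ?_
              rw [max_eq_left ht.2]
            exact (measure_mono h1).trans (htail T hs₀T)
        _ = ENNReal.ofReal (c * T ^ (-β)) * ENNReal.ofReal (T - 0) := by
            rw [MeasureTheory.setLIntegral_const, Real.volume_Ioc]
        _ = ENNReal.ofReal (c * T^(1-β)) := by
            rw [← ENNReal.ofReal_mul (by positivity)]
            congr 1
            rw [sub_zero, show (1:ℝ)-β = -β + 1 by ring, Real.rpow_add hT, Real.rpow_one]
            ring
    have hpiece2 : (∫⁻ t in Set.Ioi T, F {a : ℝ | t < f a})
        ≤ ENNReal.ofReal (c * T^(1-β)/(β-1)) := by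
      have hIntg : MeasureTheory.IntegrableOn (fun t : ℝ => c * t ^ (-β)) (Set.Ioi T) := by
        exact (integrableOn_Ioi_rpow_of_lt (by linarith) hT).const_mul c
      have hnn2 : 0 ≤ᵐ[(MeasureTheory.volume : Measure ℝ).restrict (Set.Ioi T)]
          fun t : ℝ => c * t ^ (-β) :=
        MeasureTheory.ae_restrict_of_forall_mem measurableSet_Ioi
          (fun t ht => mul_nonneg hc.le (Real.rpow_nonneg (hT.trans ht).le _))
      calc (∫⁻ t in Set.Ioi T, F {a : ℝ | t < f a})
          ≤ ∫⁻ t in Set.Ioi T, ENNReal.ofReal (c * t ^ (-β)) := by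
            refine MeasureTheory.setLIntegral_mono' measurableSet_Ioi (fun t ht => ?_)
            have h1 : {a : ℝ | t < f a} ⊆ Set.Ioi t := by
              refine (hsub t (hT.trans ht)).trans ?_
              rw [max_eq_right (le_of_lt ht)]
            exact (measure_mono h1).trans (htail t (hs₀T.trans (le_of_lt ht)))
        _ = ENNReal.ofReal (∫ t in Set.Ioi T, c * t ^ (-β)) :=
            (MeasureTheory.ofReal_integral_eq_lintegral_ofReal hIntg hnn2).symm
        _ = ENNReal.ofReal (c * T^(1-β)/(β-1)) := by
            congr 1
            rw [MeasureTheory.integral_const_mul, integral_Ioi_rpow_of_lt (by linarith) hT]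
            rw [show -β + 1 = 1 - β by ring, show (1:ℝ)-β = -(β-1) by ring,
              div_neg, neg_div, neg_neg]
            ring
    exact add_le_add hpiece1 hpiece2
  have hnn3 : (0:ℝ) ≤ c * T^(1-β) := by positivity
  have hnn4 : (0:ℝ) ≤ c * T^(1-β)/(β-1) := div_nonneg hnn3 (by linarith)
  have hfinal : ENNReal.ofReal (∫ s in Set.Ioi T, s ∂F)
      ≤ ENNReal.ofReal (c * T^(1-β) + c * T^(1-β)/(β-1)) := by
    rw [ENNReal.ofReal_add hnn3 hnn4]
    exact (hlhs.trans_eq key).trans hrhs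
  exact (ENNReal.ofReal_le_ofReal_iff (by linarith)).mp hfinal


set_option maxHeartbeats 1000000 in
/-- Layer cake bound for an increasing truncated integrand. -/
lemma mono_piece_bound
    (F : MeasureTheory.Measure ℝ) [MeasureTheory.IsProbabilityMeasure F]
    (hsupp : F (Set.Ici (0:ℝ))ᶜ = 0)
    {c β : ℝ} (hc : 0 < c) (hβ1 : 1 < β) (hβ2 : β ≤ 2)
    {s₀ T q : ℝ} (hs₀ : 1 ≤ s₀) (hs₀T : s₀ ≤ T) (hq : 0 < q)
    (h : ℕ) (hh : 6 ≤ h) (hqT : q * T = (h:ℝ) / 2)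
    (htail : ∀ s : ℝ, s₀ ≤ s → F (Set.Ioi s) ≤ ENNReal.ofReal (c * s ^ (-β))) :
    ∫ s in Set.Ioc s₀ T, s^h * Real.exp (-(q*s)) ∂F
      ≤ s₀^h + c * h * T ^ ((h:ℝ) - β) * Real.exp (-((h:ℝ)/2)) := by
  have hT : 0 < T := lt_of_lt_of_le (by linarith) hs₀T
  set φ : ℝ → ℝ := fun s => s^h * Real.exp (-(q*s)) with hφ
  set G : ℝ → ℝ := fun t => ((h:ℝ) - q*t) * t^(h-1) * Real.exp (-(q*t)) with hG
  set g : ℝ → ℝ := fun t => if t ≤ T then G t else 0 with hg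
  have hGcont : Continuous G := by fun_prop
  have hg_eq : g = (Set.Iic T).indicator G := by
    funext u; simp [hg, Set.indicator_apply, Set.mem_Iic]
  have g_intble : ∀ t, 0 < t → IntervalIntegrable g volume 0 t := by
    intro t ht
    have h1 := hGcont.intervalIntegrable (μ := volume) 0 t
    rw [intervalIntegrable_iff] at h1 ⊢
    rw [hg_eq]
    exact h1.indicator measurableSet_Iic
  have g_nn : ∀ᵐ t ∂(volume : Measure ℝ).restrict (Set.Ioi 0), 0 ≤ g t := by
    refine MeasureTheory.ae_restrict_of_forall_mem measurableSet_Ioi (fun t ht => ?_)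
    rw [hg]
    by_cases htT : t ≤ T
    · simp only [htT, if_true]
      have h1 : q * t ≤ (h:ℝ)/2 := by
        rw [← hqT]; exact mul_le_mul_of_nonneg_left htT hq.le
      have h2 : (0:ℝ) ≤ (h:ℝ) - q*t := by
        have h0 : (0:ℝ) ≤ (h:ℝ) := Nat.cast_nonneg h
        linarith
      have ht' : (0:ℝ) ≤ t := le_of_lt ht
      positivity
    · simp [htT]
  set f : ℝ → ℝ := fun s => min s T with hf
  have hae0 : ∀ᵐ s ∂F, (0:ℝ) ≤ s := by
    refine MeasureTheory.ae_iff.mpr ?_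
    have he : {a : ℝ | ¬ (0:ℝ) ≤ a} = (Set.Ici (0:ℝ))ᶜ := by ext u; simp
    rw [he]; exact hsupp
  have f_nn : 0 ≤ᵐ[F] f := hae0.mono (fun s hs => le_min hs hT.le)
  have f_mble : AEMeasurable f F := (measurable_id.min measurable_const).aemeasurable
  -- FTC for the truncated antiderivative
  have hΦ : ∀ x : ℝ, 0 ≤ x → x ≤ T → ∫ t in (0:ℝ)..x, g t = x^h * Real.exp (-(q*x)) := by
    intro x hx0 hxT
    have e1 : Set.EqOn g G (Set.uIcc 0 x) := by
      intro t ht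
      rw [Set.uIcc_of_le hx0] at ht
      have h2 : t ≤ T := le_trans ht.2 hxT
      simp [hg, h2]
    rw [intervalIntegral.integral_congr e1]
    have hderiv : ∀ t ∈ Set.uIcc (0:ℝ) x,
        HasDerivAt (fun u : ℝ => u^h * Real.exp (-(q*u))) (G t) t := by
      intro t _
      have h1 : HasDerivAt (fun u : ℝ => u^h) ((h:ℝ) * t^(h-1)) t := hasDerivAt_pow h t
      have h2 : HasDerivAt (fun u : ℝ => Real.exp (-(q*u))) (Real.exp (-(q*t)) * (-q)) t := by
        have := (((hasDerivAt_id t).const_mul q).neg).exp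
        simpa using this
      have h3 := h1.mul h2
      refine h3.congr_deriv ?_
      have hpow : t^h = t^(h-1) * t := by
        conv_lhs => rw [show h = (h-1)+1 by omega]
        rw [pow_succ]
      rw [hG]
      simp only []
      rw [hpow]; ring
    rw [intervalIntegral.integral_eq_sub_of_hasDerivAt hderiv (hGcont.intervalIntegrable 0 x)]
    simp [zero_pow (show h ≠ 0 by omega)]
  -- integrability of φ
  have hφcont : Continuous φ := by fun_prop
  have hφint : MeasureTheory.IntegrableOn φ (Set.Ioc s₀ T) F := by
    refine MeasureTheory.Measure.integrableOn_of_bounded (M := T^h)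
      (measure_ne_top F _) hφcont.aestronglyMeasurable ?_
    refine MeasureTheory.ae_restrict_of_forall_mem measurableSet_Ioc (fun s hs => ?_)
    have hs0 : (0:ℝ) < s := lt_of_lt_of_le (by linarith) hs.1.le
    have h1 : Real.exp (-(q*s)) ≤ 1 := Real.exp_le_one_iff.mpr (by nlinarith)
    have h2 : s^h ≤ T^h := pow_le_pow_left₀ hs0.le hs.2 h
    show ‖s^h * Real.exp (-(q*s))‖ ≤ T^h
    rw [Real.norm_eq_abs,
      abs_of_nonneg (mul_nonneg (pow_nonneg hs0.le h) (Real.exp_nonneg _))]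
    nlinarith [pow_nonneg hs0.le h, Real.exp_nonneg (-(q*s))]
  have hφnn : 0 ≤ᵐ[F.restrict (Set.Ioc s₀ T)] φ := by
    refine MeasureTheory.ae_restrict_of_forall_mem measurableSet_Ioc (fun s hs => ?_)
    have hs0 : (0:ℝ) < s := lt_of_lt_of_le (by linarith) hs.1.le
    rw [hφ]; positivity
  have key := MeasureTheory.lintegral_comp_eq_lintegral_meas_lt_mul F f_nn f_mble g_intble g_nn
  -- lower bound of LHS side
  have hlhs : ENNReal.ofReal (∫ s in Set.Ioc s₀ T, φ s ∂F)
      ≤ ∫⁻ s, ENNReal.ofReal (∫ t in (0:ℝ)..(f s), g t) ∂F := by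
    rw [MeasureTheory.ofReal_integral_eq_lintegral_ofReal hφint hφnn]
    calc ∫⁻ s in Set.Ioc s₀ T, ENNReal.ofReal (φ s) ∂F
        = ∫⁻ s in Set.Ioc s₀ T, ENNReal.ofReal (∫ t in (0:ℝ)..(f s), g t) ∂F := by
          refine MeasureTheory.setLIntegral_congr_fun measurableSet_Ioc
            (fun s hs => ?_)
          have h1 : f s = s := min_eq_left hs.2
          rw [h1, hΦ s (le_trans (by linarith) hs.1.le) hs.2]
      _ ≤ ∫⁻ s, ENNReal.ofReal (∫ t in (0:ℝ)..(f s), g t) ∂F :=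
          MeasureTheory.setLIntegral_le_lintegral _ _
  -- upper bound of RHS side
  have hrhs : (∫⁻ t in Set.Ioi 0, F {a : ℝ | t < f a} * ENNReal.ofReal (g t))
      ≤ ENNReal.ofReal (s₀^h)
        + ENNReal.ofReal (c * h * T ^ ((h:ℝ) - β) * Real.exp (-((h:ℝ)/2))) := by
    have hsplit1 : Set.Ioc (0:ℝ) s₀ ∪ Set.Ioi s₀ = Set.Ioi (0:ℝ) :=
      Set.Ioc_union_Ioi_eq_Ioi (by linarith)
    have hsplit2 : Set.Ioc s₀ T ∪ Set.Ioi T = Set.Ioi s₀ :=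
      Set.Ioc_union_Ioi_eq_Ioi hs₀T
    have hdisj1 : Disjoint (Set.Ioc (0:ℝ) s₀) (Set.Ioi s₀) := by
      rw [Set.disjoint_left]; intro a ha ha'; exact absurd ha.2 (not_le.mpr ha')
    have hdisj2 : Disjoint (Set.Ioc s₀ T) (Set.Ioi T) := by
      rw [Set.disjoint_left]; intro a ha ha'; exact absurd ha.2 (not_le.mpr ha')
    rw [← hsplit1, MeasureTheory.lintegral_union measurableSet_Ioi hdisj1,
      ← hsplit2, MeasureTheory.lintegral_union measurableSet_Ioi hdisj2]
    -- third piece vanishes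
    have hp3 : (∫⁻ t in Set.Ioi T, F {a : ℝ | t < f a} * ENNReal.ofReal (g t)) = 0 := by
      rw [← MeasureTheory.lintegral_zero (μ := (volume : Measure ℝ).restrict (Set.Ioi T))]
      refine MeasureTheory.setLIntegral_congr_fun measurableSet_Ioi
        (fun t ht => ?_)
      have h1 : ¬ t ≤ T := not_le.mpr ht
      rw [hg]
      simp [h1]
    -- first piece
    have hp1 : (∫⁻ t in Set.Ioc 0 s₀, F {a : ℝ | t < f a} * ENNReal.ofReal (g t))
        ≤ ENNReal.ofReal (s₀^h) := by
      have hb : (∫⁻ t in Set.Ioc 0 s₀, F {a : ℝ | t < f a} * ENNReal.ofReal (g t))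
          ≤ ∫⁻ t in Set.Ioc 0 s₀, ENNReal.ofReal (g t) := by
        refine MeasureTheory.setLIntegral_mono' measurableSet_Ioc (fun t _ => ?_)
        calc F {a : ℝ | t < f a} * ENNReal.ofReal (g t)
            ≤ 1 * ENNReal.ofReal (g t) :=
              mul_le_mul_left MeasureTheory.prob_le_one _
          _ = ENNReal.ofReal (g t) := one_mul _
      refine hb.trans ?_
      have hgint : MeasureTheory.IntegrableOn g (Set.Ioc 0 s₀) volume := by
        have h1 := g_intble s₀ (by linarith)
        rw [intervalIntegrable_iff, Set.uIoc_of_le (by linarith : (0:ℝ) ≤ s₀)] at h1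
        exact h1
      have hgnn : 0 ≤ᵐ[(volume : Measure ℝ).restrict (Set.Ioc 0 s₀)] g := by
        refine MeasureTheory.ae_restrict_of_forall_mem measurableSet_Ioc (fun t ht => ?_)
        rw [hg]
        by_cases htT : t ≤ T
        · simp only [htT, if_true]
          have h1 : q * t ≤ (h:ℝ)/2 := by
            rw [← hqT]; exact mul_le_mul_of_nonneg_left htT hq.le
          have h2 : (0:ℝ) ≤ (h:ℝ) - q*t := by
            have h0 : (0:ℝ) ≤ (h:ℝ) := Nat.cast_nonneg h
            linarith
          have ht' : (0:ℝ) ≤ t := le_of_lt ht.1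
          positivity
        · simp [htT]
      rw [← MeasureTheory.ofReal_integral_eq_lintegral_ofReal hgint hgnn]
      apply ENNReal.ofReal_le_ofReal
      have h2 : ∫ t in Set.Ioc 0 s₀, g t = ∫ t in (0:ℝ)..s₀, g t :=
        (intervalIntegral.integral_of_le (by linarith)).symm
      rw [h2, hΦ s₀ (by linarith) hs₀T]
      have h3 : Real.exp (-(q*s₀)) ≤ 1 := Real.exp_le_one_iff.mpr (by nlinarith)
      nlinarith [pow_nonneg (show (0:ℝ) ≤ s₀ by linarith) h]
    -- second piece
    have hp2 : (∫⁻ t in Set.Ioc s₀ T, F {a : ℝ | t < f a} * ENNReal.ofReal (g t))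
        ≤ ENNReal.ofReal (c * h * T ^ ((h:ℝ) - β) * Real.exp (-((h:ℝ)/2))) := by
      have hmono : ∀ t : ℝ, t ∈ Set.Ioc s₀ T →
          c * t ^ (-β) * g t ≤ c * h * T ^ ((h:ℝ)-1-β) * Real.exp (-((h:ℝ)/2)) := by
        intro t ht
        have ht0 : (0:ℝ) < t := lt_of_lt_of_le (by linarith) ht.1.le
        have hgt : g t = G t := by rw [hg]; simp [ht.2]
        have hGle : G t ≤ (h:ℝ) * (t^(h-1) * Real.exp (-(q*t))) := by
          have h1 : (h:ℝ) - q*t ≤ (h:ℝ) := by nlinarith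
          calc G t = ((h:ℝ) - q*t) * t^(h-1) * Real.exp (-(q*t)) := rfl
            _ ≤ (h:ℝ) * t^(h-1) * Real.exp (-(q*t)) := by
                gcongr
                all_goals first | exact ht0.le | exact h1
            _ = (h:ℝ) * (t^(h-1) * Real.exp (-(q*t))) := by ring
        -- combine powers into rpow
        have hcomb : t ^ (-β) * (t^(h-1) : ℝ) = t ^ ((h:ℝ)-1-β) := by
          rw [← Real.rpow_natCast t (h-1), ← Real.rpow_add ht0]
          congr 1
          push_cast [show ((h-1:ℕ):ℝ) = (h:ℝ)-1 by push_cast [Nat.cast_sub (by omega : 1 ≤ h)]; ring]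
          ring
        have hmle : t ^ ((h:ℝ)-1-β) * Real.exp (-(q*t)) ≤ T ^ ((h:ℝ)-1-β) * Real.exp (-(q*T)) := by
          set a : ℝ := (h:ℝ)-1-β with ha
          have ha2 : (h:ℝ)/2 ≤ a := by
            have h6 : (6:ℝ) ≤ (h:ℝ) := by exact_mod_cast hh
            rw [ha]; linarith
          have ha0 : 0 < a := lt_of_lt_of_le (by positivity) ha2
          rw [Real.rpow_def_of_pos ht0, Real.rpow_def_of_pos hT, ← Real.exp_add, ← Real.exp_add]
          apply Real.exp_le_exp.mpr
          have hlog : 1 - t/T ≤ Real.log T - Real.log t := by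
            have h1 := Real.log_le_sub_one_of_pos (div_pos ht0 hT)
            rw [Real.log_div ht0.ne' hT.ne'] at h1
            linarith
          have hTt : 0 ≤ T - t := by linarith [ht.2]
          have h4 : q*(T-t) = ((h:ℝ)/2)*((T-t)/T) := by
            rw [← hqT]; field_simp
          have h5 : (T-t)/T = 1 - t/T := by field_simp
          have hfrac : 0 ≤ (T-t)/T := div_nonneg hTt hT.le
          have h6 : ((h:ℝ)/2)*((T-t)/T) ≤ a*((T-t)/T) :=
            mul_le_mul_of_nonneg_right ha2 hfrac
          have h7 : a*(1 - t/T) ≤ a*(Real.log T - Real.log t) :=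
            mul_le_mul_of_nonneg_left hlog ha0.le
          rw [h5] at h6
          nlinarith [h4, h6, h7]
        calc c * t ^ (-β) * g t = c * t ^ (-β) * G t := by rw [hgt]
          _ ≤ c * t ^ (-β) * ((h:ℝ) * (t^(h-1) * Real.exp (-(q*t)))) :=
              mul_le_mul_of_nonneg_left hGle (by positivity)
          _ = c * h * (t ^ ((h:ℝ)-1-β) * Real.exp (-(q*t))) := by
              rw [← hcomb]; ring
          _ ≤ c * h * (T ^ ((h:ℝ)-1-β) * Real.exp (-(q*T))) :=
              mul_le_mul_of_nonneg_left hmle (by positivity)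
          _ = c * h * T ^ ((h:ℝ)-1-β) * Real.exp (-((h:ℝ)/2)) := by
              rw [hqT]; ring
      have hb : (∫⁻ t in Set.Ioc s₀ T, F {a : ℝ | t < f a} * ENNReal.ofReal (g t))
          ≤ ∫⁻ _t in Set.Ioc s₀ T,
              ENNReal.ofReal (c * h * T ^ ((h:ℝ)-1-β) * Real.exp (-((h:ℝ)/2))) := by
        refine MeasureTheory.setLIntegral_mono' measurableSet_Ioc (fun t ht => ?_)
        have hsub : {a : ℝ | t < f a} ⊆ Set.Ioi t := by
          intro a ha
          simp only [Set.mem_setOf_eq, hf] at ha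
          exact lt_of_lt_of_le ha (min_le_left _ _)
        have h1 : F {a : ℝ | t < f a} ≤ ENNReal.ofReal (c * t ^ (-β)) :=
          (measure_mono hsub).trans (htail t ht.1.le)
        calc F {a : ℝ | t < f a} * ENNReal.ofReal (g t)
            ≤ ENNReal.ofReal (c * t ^ (-β)) * ENNReal.ofReal (g t) :=
              mul_le_mul_left h1 _
          _ = ENNReal.ofReal (c * t ^ (-β) * g t) := by
              rw [← ENNReal.ofReal_mul]
              have ht0 : (0:ℝ) < t := lt_of_lt_of_le (by linarith) ht.1.le
              positivity
          _ ≤ ENNReal.ofReal (c * h * T ^ ((h:ℝ)-1-β) * Real.exp (-((h:ℝ)/2))) :=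
              ENNReal.ofReal_le_ofReal (hmono t ht)
      refine hb.trans ?_
      rw [MeasureTheory.setLIntegral_const, Real.volume_Ioc]
      calc ENNReal.ofReal (c * h * T ^ ((h:ℝ)-1-β) * Real.exp (-((h:ℝ)/2)))
            * ENNReal.ofReal (T - s₀)
          ≤ ENNReal.ofReal (c * h * T ^ ((h:ℝ)-1-β) * Real.exp (-((h:ℝ)/2)))
            * ENNReal.ofReal T := by
            exact mul_le_mul_right (ENNReal.ofReal_le_ofReal (by linarith)) _
        _ = ENNReal.ofReal (c * h * T ^ ((h:ℝ) - β) * Real.exp (-((h:ℝ)/2))) := by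
            rw [← ENNReal.ofReal_mul (by positivity)]
            congr 1
            rw [show (h:ℝ) - β = ((h:ℝ)-1-β) + 1 by ring, Real.rpow_add hT, Real.rpow_one]
            ring
    calc (∫⁻ t in Set.Ioc 0 s₀, F {a : ℝ | t < f a} * ENNReal.ofReal (g t))
          + ((∫⁻ t in Set.Ioc s₀ T, F {a : ℝ | t < f a} * ENNReal.ofReal (g t))
            + (∫⁻ t in Set.Ioi T, F {a : ℝ | t < f a} * ENNReal.ofReal (g t)))
        = (∫⁻ t in Set.Ioc 0 s₀, F {a : ℝ | t < f a} * ENNReal.ofReal (g t))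
          + (∫⁻ t in Set.Ioc s₀ T, F {a : ℝ | t < f a} * ENNReal.ofReal (g t)) := by
          rw [hp3, add_zero]
      _ ≤ _ := add_le_add hp1 hp2
  -- conclude
  have hfinal : ENNReal.ofReal (∫ s in Set.Ioc s₀ T, φ s ∂F)
      ≤ ENNReal.ofReal (s₀^h + c * h * T ^ ((h:ℝ) - β) * Real.exp (-((h:ℝ)/2))) := by
    rw [ENNReal.ofReal_add (by positivity) (by positivity)]
    exact (hlhs.trans_eq key).trans hrhs
  exact (ENNReal.ofReal_le_ofReal_iff (by positivity)).mp hfinal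

set_option maxHeartbeats 2000000 in
/-- Bound for the trivial partition in the critical case `β = D/(D-1)`: if `F` is a
probability measure on `[0,∞)` with mean `1` and tail `F((s,∞)) ≤ c₂ s^{-D/(D-1)}`
for `s ≥ s₀`, `h ≥ 6`, `k ≥ D max(c₂, 1/c₂) s₀^{2h} h^{h+1}` and
`0 < q ≤ min(c₂, k^{-(D-1)(h+1)})`, then
`∫₀^∞ (k+s) J_h(s) dF(s) ≤ 55 D c₂ (q/h)^{1/(D-1)}`. -/
theorem decay_of_tails_jsq_stmt13
    (D : ℕ) (hD : 2 ≤ D) (c₂ s₀ : ℝ) (hc₂ : 0 < c₂) (hs₀ : 1 ≤ s₀)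
    (F : Measure ℝ) [IsProbabilityMeasure F]
    (hsupp : F (Set.Ici (0:ℝ))ᶜ = 0) (hmean : ∫ s, s ∂F = 1)
    (htail : ∀ s : ℝ, s₀ ≤ s →
      F (Set.Ioi s) ≤ ENNReal.ofReal (c₂ * s ^ (-((D:ℝ) / ((D:ℝ) - 1)))))
    (h : ℕ) (hh : 6 ≤ h) (k : ℝ)
    (hk : (D:ℝ) * max c₂ c₂⁻¹ * s₀ ^ (2 * h) * (h:ℝ) ^ (h + 1) ≤ k)
    (q : ℝ) (hq0 : 0 < q)
    (hq : q ≤ min c₂ (k ^ (-(((D:ℝ) - 1) * ((h:ℝ) + 1))))) :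
    ∫ s, (k + s) * jsqPoissonTail q h s ∂F ≤
      55 * (D:ℝ) * c₂ * (q / (h:ℝ)) ^ (1 / ((D:ℝ) - 1)) := by
  classical
  set d : ℝ := (D:ℝ) with hd_def
  have hd2 : (2:ℝ) ≤ d := by rw [hd_def]; exact_mod_cast hD
  have hd10 : (0:ℝ) < d - 1 := by linarith
  set β : ℝ := d / (d - 1) with hβ_def
  have hβ1 : 1 < β := by rw [hβ_def, lt_div_iff₀ hd10]; linarith
  have hβ2 : β ≤ 2 := by rw [hβ_def, div_le_iff₀ hd10]; linarith
  have hβm1 : β - 1 = 1/(d-1) := by rw [hβ_def]; field_simp; ring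
  have hh6 : (6:ℝ) ≤ (h:ℝ) := by exact_mod_cast hh
  have hhpos : (0:ℝ) < (h:ℝ) := by linarith
  have hs₀0 : (0:ℝ) < s₀ := by linarith
  -- k is large
  have hmax1 : (1:ℝ) ≤ max c₂ c₂⁻¹ := by
    rcases le_total c₂ 1 with hc | hc
    · refine le_max_of_le_right ?_
      nlinarith [inv_pos.mpr hc₂, mul_inv_cancel₀ hc₂.ne']
    · exact le_max_of_le_left hc
  have hsp1 : (1:ℝ) ≤ s₀^(2*h) := one_le_pow₀ hs₀
  have hhp1 : (1:ℝ) ≤ (h:ℝ)^(h+1) := one_le_pow₀ (by linarith)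
  have hmax0 : (0:ℝ) < max c₂ c₂⁻¹ := lt_of_lt_of_le one_pos hmax1
  have t1 : (2:ℝ) ≤ d * max c₂ c₂⁻¹ := by nlinarith
  have t2 : (2:ℝ) ≤ d * max c₂ c₂⁻¹ * s₀^(2*h) := by nlinarith
  have hk2 : (2:ℝ) ≤ k := le_trans (by nlinarith) hk
  have hk1 : (1:ℝ) ≤ k := by linarith
  have hk0 : s₀^(2*h) * (h:ℝ)^(h+1) ≤ k := by
    refine le_trans ?_ hk
    calc s₀^(2*h)*(h:ℝ)^(h+1) = 1 * (s₀^(2*h)*(h:ℝ)^(h+1)) := (one_mul _).symm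
      _ ≤ (d * max c₂ c₂⁻¹) * (s₀^(2*h)*(h:ℝ)^(h+1)) := by
          refine mul_le_mul_of_nonneg_right (by linarith) (by positivity)
      _ = d * max c₂ c₂⁻¹ * s₀^(2*h) * (h:ℝ)^(h+1) := by ring
  have hks₀h : s₀^h ≤ k := by
    have e1 : s₀^h ≤ s₀^(2*h) := pow_le_pow_right₀ hs₀ (by omega)
    nlinarith [pow_pos hs₀0 (2*h)]
  have hkh : (h:ℝ) ≤ k := by
    have e1 : (h:ℝ) ≤ (h:ℝ)^(h+1) := le_self_pow₀ (by linarith) (by omega)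
    nlinarith [pow_pos hhpos (h+1)]
  have hkh3 : (h:ℝ)^3 ≤ k := by
    have e1 : (h:ℝ)^3 ≤ (h:ℝ)^(h+1) := pow_le_pow_right₀ (by linarith) (by omega)
    nlinarith [pow_pos hhpos (h+1)]
  have hks₀ : s₀ ≤ k := le_trans (le_self_pow₀ hs₀ (by omega)) hks₀h
  -- q is small
  have hqc₂ : q ≤ c₂ := hq.trans (min_le_left _ _)
  have hqk : q ≤ (k ^ (h+1) : ℝ)⁻¹ := by
    have h1 : q ≤ k ^ (-((d - 1) * ((h:ℝ) + 1))) := hq.trans (min_le_right _ _)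
    have h2 : k ^ (-((d - 1) * ((h:ℝ) + 1))) ≤ k ^ (-((h:ℝ) + 1)) := by
      apply Real.rpow_le_rpow_of_exponent_le hk1
      nlinarith
    have h3 : k ^ (-((h:ℝ) + 1)) = (k ^ (h+1) : ℝ)⁻¹ := by
      rw [Real.rpow_neg (by linarith), ← Real.rpow_natCast k (h+1)]
      norm_num
    linarith [h1.trans (h2.trans_eq h3)]
  have hqinv : q ≤ k⁻¹ := by
    refine hqk.trans (inv_anti₀ (by linarith) (le_self_pow₀ hk1 (by omega)))
  have hkq : k * q ≤ 1 := by
    calc k * q ≤ k * k⁻¹ := mul_le_mul_of_nonneg_left hqinv (by linarith)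
      _ = 1 := mul_inv_cancel₀ (by linarith)
  have hq1 : q ≤ 1 := by nlinarith
  have hN : ∀ (a : ℝ) (m : ℕ), 0 ≤ a → a ≤ k^3 → 3 ≤ m → a * q^m ≤ 1 := by
    intro a m ha hak hm
    have h1 : q^m ≤ ((k^(h+1):ℝ)⁻¹)^m := pow_le_pow_left₀ hq0.le hqk m
    have h2 : ((k^(h+1):ℝ)⁻¹)^m = (k^((h+1)*m) : ℝ)⁻¹ := by rw [inv_pow, ← pow_mul]
    have h3 : (k:ℝ)^3 ≤ (k^((h+1)*m) : ℝ) := pow_le_pow_right₀ hk1 (by nlinarith)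
    calc a * q^m ≤ k^3 * (k^((h+1)*m):ℝ)⁻¹ := by
          refine mul_le_mul hak (h1.trans_eq h2) (by positivity) (by positivity)
      _ ≤ 1 := by
          rw [← div_eq_mul_inv, div_le_one (by positivity)]
          exact h3
  -- the threshold T
  set T : ℝ := (h:ℝ)/(2*q) with hT_def
  have hTpos : 0 < T := div_pos hhpos (by positivity)
  have hqT : q * T = (h:ℝ)/2 := by rw [hT_def]; field_simp
  have hqs₀ : q * s₀ ≤ 1 := by
    calc q * s₀ ≤ k⁻¹ * k := by
          refine mul_le_mul hqinv hks₀ hs₀0.le (by positivity)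
      _ = 1 := inv_mul_cancel₀ (by linarith)
  have hs₀T : s₀ ≤ T := by
    rw [hT_def, le_div_iff₀ (by positivity)]
    nlinarith
  -- integrability
  have hid_int : Integrable (fun s : ℝ => s) F := by
    by_contra hcon
    rw [MeasureTheory.integral_undef hcon] at hmean
    norm_num at hmean
  have hae0 : ∀ᵐ s ∂F, (0:ℝ) ≤ s := by
    refine MeasureTheory.ae_iff.mpr ?_
    have he : {a : ℝ | ¬ (0:ℝ) ≤ a} = (Set.Ici (0:ℝ))ᶜ := by ext u; simp
    rw [he]; exact hsupp
  set Jf : ℝ → ℝ := fun s => (k + s) * jsqPoissonTail q h s with hJf_def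
  have hJfcont : Continuous Jf :=
    (continuous_const.add continuous_id).mul (jsq_continuous q h)
  have hJfint : Integrable Jf F := by
    refine MeasureTheory.Integrable.mono
      ((MeasureTheory.integrable_const k).add hid_int.abs) hJfcont.aestronglyMeasurable ?_
    filter_upwards [hae0] with s hs
    have hx : 0 ≤ q * s := mul_nonneg hq0.le hs
    have h0 : 0 ≤ jsqPoissonTail q h s := jsq_nonneg q h s hx
    have h1 : jsqPoissonTail q h s ≤ 1 := jsq_le_one q h s hx
    have hks : 0 ≤ k + s := by linarith
    simp only [Pi.add_apply, Real.norm_eq_abs]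
    rw [abs_of_nonneg (mul_nonneg hks h0),
      abs_of_nonneg (show (0:ℝ) ≤ k + |s| by positivity)]
    nlinarith [mul_le_mul_of_nonneg_left h1 hks, le_abs_self s]
  -- decompose the integral
  have hIci : ∫ s, Jf s ∂F = ∫ s in Set.Ici 0, Jf s ∂F := by
    have h1 := MeasureTheory.integral_add_compl (s := Set.Ici (0:ℝ)) measurableSet_Ici hJfint (μ := F)
    have h2 : ∫ s in (Set.Ici (0:ℝ))ᶜ, Jf s ∂F = 0 := by
      rw [MeasureTheory.Measure.restrict_eq_zero.mpr hsupp, MeasureTheory.integral_zero_measure]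
    linarith [h1]
  have hunion1 : Set.Icc (0:ℝ) s₀ ∪ Set.Ioc s₀ T = Set.Icc 0 T :=
    Set.Icc_union_Ioc_eq_Icc (by linarith) hs₀T
  have hunion2 : Set.Icc (0:ℝ) T ∪ Set.Ioi T = Set.Ici 0 :=
    Set.Icc_union_Ioi_eq_Ici hTpos.le
  have hdisj1 : Disjoint (Set.Icc (0:ℝ) s₀) (Set.Ioc s₀ T) := by
    rw [Set.disjoint_left]; intro a ha ha'; exact absurd ha.2 (not_le.mpr ha'.1)
  have hdisj2 : Disjoint (Set.Icc (0:ℝ) T) (Set.Ioi T) := by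
    rw [Set.disjoint_left]; intro a ha ha'; exact absurd ha.2 (not_le.mpr ha')
  have hsplit : ∫ s, Jf s ∂F
      = (∫ s in Set.Icc 0 s₀, Jf s ∂F + ∫ s in Set.Ioc s₀ T, Jf s ∂F)
        + ∫ s in Set.Ioi T, Jf s ∂F := by
    rw [hIci, ← hunion2,
      MeasureTheory.setIntegral_union hdisj2 measurableSet_Ioi
        hJfint.integrableOn hJfint.integrableOn, ← hunion1,
      MeasureTheory.setIntegral_union hdisj1 measurableSet_Ioc
        hJfint.integrableOn hJfint.integrableOn]
  -- the quantity X
  rw [← hβm1]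
  set X : ℝ := (q/(h:ℝ))^(β-1) with hX_def
  have hqh0 : 0 < q/(h:ℝ) := by positivity
  have hqh1 : q/(h:ℝ) ≤ 1 := by rw [div_le_one hhpos]; linarith
  have hX0 : 0 < X := Real.rpow_pos_of_pos hqh0 _
  have hXq : q/(h:ℝ) ≤ X := by
    have := Real.rpow_le_rpow_of_exponent_ge hqh0 hqh1 (show β - 1 ≤ 1 by linarith)
    rwa [Real.rpow_one] at this
  have hfac1 : (1:ℝ) ≤ (Nat.factorial h : ℝ) := by exact_mod_cast (Nat.factorial_pos h)
  have hfacpos : (0:ℝ) < (Nat.factorial h : ℝ) := by linarith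
  -- ------------------------------------------------------------------ Term 1
  have hT1 : ∫ s in Set.Icc 0 s₀, Jf s ∂F ≤ c₂ * X := by
    have hconst : (0:ℝ) ≤ (k+s₀) * ((q*s₀)^h / (Nat.factorial h : ℝ)) := by positivity
    have hbound : ∀ s ∈ Set.Icc (0:ℝ) s₀, Jf s ≤ (k+s₀) * ((q*s₀)^h / (Nat.factorial h : ℝ)) := by
      intro s hs
      have hx : 0 ≤ q*s := mul_nonneg hq0.le hs.1
      have h1 := jsq_le_pow q h s hx
      have h2 : (q*s)^h ≤ (q*s₀)^h :=
        pow_le_pow_left₀ hx (mul_le_mul_of_nonneg_left hs.2 hq0.le) h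
      have h3 : jsqPoissonTail q h s ≤ (q*s₀)^h / (Nat.factorial h:ℝ) := h1.trans (by gcongr)
      exact mul_le_mul (by linarith [hs.2]) h3 (jsq_nonneg _ _ _ hx) (by linarith [hs.1, hk2])
    have hstep : ∫ s in Set.Icc 0 s₀, Jf s ∂F ≤ (k+s₀) * ((q*s₀)^h / (Nat.factorial h : ℝ)) := by
      have e1 : ∫ s in Set.Icc 0 s₀, Jf s ∂F
          ≤ ∫ _s in Set.Icc 0 s₀, (k+s₀) * ((q*s₀)^h / (Nat.factorial h : ℝ)) ∂F :=
        MeasureTheory.setIntegral_mono_on hJfint.integrableOn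
          (MeasureTheory.integrable_const _).integrableOn
          measurableSet_Icc hbound
      refine e1.trans ?_
      rw [MeasureTheory.setIntegral_const, smul_eq_mul]
      have e2 : (F (Set.Icc 0 s₀)).toReal ≤ 1 := by
        have h1 := MeasureTheory.prob_le_one (μ := F) (s := Set.Icc 0 s₀)
        calc (F (Set.Icc 0 s₀)).toReal ≤ (1:ENNReal).toReal :=
            ENNReal.toReal_mono (by norm_num) h1
          _ = 1 := ENNReal.toReal_one
      calc (F (Set.Icc 0 s₀)).toReal * ((k+s₀) * ((q*s₀)^h / (Nat.factorial h : ℝ)))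
          ≤ 1 * ((k+s₀) * ((q*s₀)^h / (Nat.factorial h : ℝ))) :=
            mul_le_mul_of_nonneg_right e2 hconst
        _ = (k+s₀) * ((q*s₀)^h / (Nat.factorial h : ℝ)) := one_mul _
    refine hstep.trans ?_
    have hnum : (k+s₀) * ((q*s₀)^h / (Nat.factorial h : ℝ)) ≤ c₂ * (q/(h:ℝ)) := by
      have e3 : (q*s₀)^h / (Nat.factorial h:ℝ) ≤ q^h * k := by
        rw [mul_pow]
        calc q^h * s₀^h / (Nat.factorial h:ℝ) ≤ q^h * s₀^h / 1 := by gcongr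
          _ = q^h * s₀^h := div_one _
          _ ≤ q^h * k := mul_le_mul_of_nonneg_left hks₀h (by positivity)
      have e4 : (k+s₀) * ((q*s₀)^h / (Nat.factorial h:ℝ)) ≤ (2*k) * (q^h*k) :=
        mul_le_mul (by linarith) e3 (by positivity) (by linarith)
      refine e4.trans ?_
      have hsmall : (2*k^2*(h:ℝ)) * q^(h-2) ≤ 1 := by
        refine hN _ _ (by positivity) ?_ (by omega)
        -- 2k²h ≤ k³  (since 2h ≤ k)
        have a0 : (0:ℝ) ≤ (h:ℝ)^2 * ((h:ℝ) - 2) :=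
          mul_nonneg (sq_nonneg _) (by linarith only [hh6])
        have a1 : 2*(h:ℝ) ≤ (h:ℝ)^3 := by
          have b1 : (0:ℝ) ≤ (h:ℝ)*(((h:ℝ)-2)*((h:ℝ)+1)) :=
            mul_nonneg hhpos.le (mul_nonneg (by linarith only [hh6]) (by linarith only [hhpos]))
          linarith only [b1, sq_nonneg ((h:ℝ))]
        have i2 : 2*(h:ℝ) ≤ k := le_trans a1 hkh3
        have i3 : k^2*(2*(h:ℝ)) ≤ k^2*k := mul_le_mul_of_nonneg_left i2 (sq_nonneg k)
        calc 2*k^2*(h:ℝ) = k^2*(2*(h:ℝ)) := by ring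
          _ ≤ k^2*k := i3
          _ = k^3 := by ring
      have e5 : (2*k)*(q^h*k) = ((2*k^2*(h:ℝ))*q^(h-2)) * (q * (q/(h:ℝ))) := by
        have hqsplit : q^h = q^(h-2) * q * q := by
          rw [← pow_succ, ← pow_succ]; congr 1; omega
        rw [hqsplit]; field_simp
      rw [e5]
      calc ((2*k^2*(h:ℝ))*q^(h-2)) * (q * (q/(h:ℝ))) ≤ 1 * (q*(q/(h:ℝ))) :=
          mul_le_mul_of_nonneg_right hsmall (by positivity)
        _ = q * (q/(h:ℝ)) := one_mul _
        _ ≤ c₂ * (q/(h:ℝ)) := mul_le_mul_of_nonneg_right hqc₂ (by positivity)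
    exact hnum.trans (mul_le_mul_of_nonneg_left hXq hc₂.le)
  -- common rpow facts
  have hTinv : T⁻¹ = 2*q/(h:ℝ) := by rw [hT_def, inv_div]
  have h2qh : (0:ℝ) < 2*q/(h:ℝ) := by positivity
  have hexp1 : (2*q/(h:ℝ))^(β-1) ≤ 2 * X := by
    have e1 : (2*q/(h:ℝ)) = 2 * (q/(h:ℝ)) := by ring
    rw [e1, Real.mul_rpow (by norm_num) (by positivity)]
    have e2 : (2:ℝ)^(β-1) ≤ 2^(1:ℝ) :=
      Real.rpow_le_rpow_of_exponent_le one_le_two (by linarith)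
    rw [Real.rpow_one] at e2
    exact mul_le_mul_of_nonneg_right e2 (Real.rpow_nonneg (by positivity) _)
  -- ------------------------------------------------------------------ Term 3
  have hT3 : ∫ s in Set.Ioi T, Jf s ∂F ≤ c₂ * X + 2*d*(c₂*X) := by
    have hstep1 : ∫ s in Set.Ioi T, Jf s ∂F ≤ ∫ s in Set.Ioi T, (k + s) ∂F := by
      refine MeasureTheory.setIntegral_mono_on hJfint.integrableOn
        (((MeasureTheory.integrable_const k).add hid_int).integrableOn) measurableSet_Ioi ?_
      intro s hs
      have hs0 : (0:ℝ) < s := hTpos.trans hs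
      have hx : 0 ≤ q*s := by positivity
      have h1 := jsq_le_one q h s hx
      have hks0 : (0:ℝ) ≤ k + s := by linarith only [hk2, hs0]
      calc Jf s = (k+s) * jsqPoissonTail q h s := rfl
        _ ≤ (k+s) * 1 := mul_le_mul_of_nonneg_left h1 hks0
        _ = k + s := mul_one _
    refine hstep1.trans ?_
    have hsumints : ∫ s in Set.Ioi T, (k + s) ∂F
        = (∫ _s in Set.Ioi T, k ∂F) + ∫ s in Set.Ioi T, s ∂F :=
      MeasureTheory.integral_add ((MeasureTheory.integrable_const k).integrableOn)
        (hid_int.integrableOn)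
    rw [hsumints]
    have hkpart : (∫ _s in Set.Ioi T, k ∂F) ≤ c₂ * X := by
      rw [MeasureTheory.setIntegral_const, smul_eq_mul]
      have hFT : (F (Set.Ioi T)).toReal ≤ c₂ * T^(-β) :=
        ENNReal.toReal_le_of_le_ofReal (by positivity) (htail T hs₀T)
      have e3 : T^(-β) = (2*q/(h:ℝ)) * (2*q/(h:ℝ))^(β-1) := by
        have e0 : T^(-β) = (2*q/(h:ℝ))^β := by
          rw [Real.rpow_neg hTpos.le, ← Real.inv_rpow hTpos.le, hTinv]
        rw [e0]
        have e0b : (2*q/(h:ℝ)) * (2*q/(h:ℝ))^(β-1) = (2*q/(h:ℝ))^(1+(β-1)) := by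
          rw [Real.rpow_add h2qh, Real.rpow_one]
        rw [e0b]
        congr 1
        ring
      have e4 : 4*(k*q)/(h:ℝ) ≤ 1 := by
        rw [div_le_one hhpos]; linarith only [hkq, hh6]
      calc (F (Set.Ioi T)).toReal * k ≤ (c₂ * T^(-β)) * k :=
          mul_le_mul_of_nonneg_right hFT (by linarith)
        _ = c₂ * ((2*q/(h:ℝ)) * (2*q/(h:ℝ))^(β-1)) * k := by rw [e3]
        _ ≤ c₂ * ((2*q/(h:ℝ)) * (2*X)) * k := by
            refine mul_le_mul_of_nonneg_right
              (mul_le_mul_of_nonneg_left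
                (mul_le_mul_of_nonneg_left hexp1 h2qh.le) hc₂.le) (by linarith)
        _ = (4*(k*q)/(h:ℝ)) * (c₂ * X) := by ring
        _ ≤ 1 * (c₂*X) := mul_le_mul_of_nonneg_right e4 (by positivity)
        _ = c₂ * X := one_mul _
    have hspart := tail_first_moment F hc₂ hβ1 hs₀T hTpos htail hid_int.integrableOn
    have hsnum : c₂ * T^(1-β) + c₂*T^(1-β)/(β-1) ≤ 2*d*(c₂*X) := by
      have e5 : T^(1-β) = (2*q/(h:ℝ))^(β-1) := by
        rw [show (1:ℝ)-β = -(β-1) by ring, Real.rpow_neg hTpos.le,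
          ← Real.inv_rpow hTpos.le, hTinv]
      have e6 : T^(1-β) ≤ 2*X := e5 ▸ hexp1
      have e7 : 1/(β-1) = d-1 := by rw [hβm1, one_div_one_div]
      calc c₂ * T^(1-β) + c₂*T^(1-β)/(β-1) = c₂ * T^(1-β) * (1 + 1/(β-1)) := by ring
        _ = c₂ * T^(1-β) * d := by rw [e7]; ring
        _ ≤ c₂ * (2*X) * d :=
            mul_le_mul_of_nonneg_right (mul_le_mul_of_nonneg_left e6 hc₂.le) (by linarith)
        _ = 2*d*(c₂*X) := by ring
    exact add_le_add hkpart (hspart.trans hsnum)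
  -- ------------------------------------------------------------------ Term 2
  have hT2 : ∫ s in Set.Ioc s₀ T, Jf s ∂F ≤ c₂ * X + 100*(c₂*X) := by
    set C₀ : ℝ := 2*(h:ℝ)*q^(h-1)/(Nat.factorial h : ℝ) with hC₀_def
    have hC₀0 : 0 ≤ C₀ := by positivity
    have hpoint : ∀ s ∈ Set.Ioc s₀ T, Jf s ≤ C₀ * (s^h * Real.exp (-(q*s))) := by
      intro s hs
      have hs0 : (0:ℝ) < s := by linarith [hs.1]
      have hx : 0 ≤ q*s := by positivity
      have hqsT : q*s ≤ (h:ℝ)/2 := by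
        rw [← hqT]; exact mul_le_mul_of_nonneg_left hs.2 hq0.le
      have hqs2 : q*s ≤ ((h:ℝ)+1)/2 := by linarith
      have hJ2 := jsq_le_two q h s hx hqs2
      have hks : k + s ≤ (h:ℝ)/q := by
        rw [le_div_iff₀ hq0]
        have hdistr : (k+s)*q = k*q + q*s := by ring
        linarith only [hdistr, hkq, hqsT, hh6]
      calc Jf s ≤ ((h:ℝ)/q) * (2 * ((q*s)^h * Real.exp (-(q*s)) / (Nat.factorial h : ℝ))) := by
            refine mul_le_mul hks hJ2 (jsq_nonneg q h s hx) (by positivity)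
        _ = C₀ * (s^h * Real.exp (-(q*s))) := by
            rw [hC₀_def, mul_pow]
            have hqh : q^h = q^(h-1)*q := by rw [← pow_succ]; congr 1; omega
            rw [hqh]
            field_simp
    have hφint : MeasureTheory.IntegrableOn
        (fun s => s^h * Real.exp (-(q*s))) (Set.Ioc s₀ T) F := by
      refine MeasureTheory.Measure.integrableOn_of_bounded (M := T^h)
        (measure_ne_top F _)
        (Continuous.aestronglyMeasurable (by fun_prop)) ?_
      refine MeasureTheory.ae_restrict_of_forall_mem measurableSet_Ioc (fun s hs => ?_)
      have hs0 : (0:ℝ) < s := by linarith [hs.1]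
      have h1 : Real.exp (-(q*s)) ≤ 1 := Real.exp_le_one_iff.mpr
        (by linarith only [mul_pos hq0 hs0])
      have h2 : s^h ≤ T^h := pow_le_pow_left₀ hs0.le hs.2 h
      rw [Real.norm_eq_abs, abs_of_nonneg (mul_nonneg (pow_nonneg hs0.le h) (Real.exp_nonneg _))]
      calc s^h * Real.exp (-(q*s)) ≤ s^h * 1 :=
          mul_le_mul_of_nonneg_left h1 (pow_nonneg hs0.le h)
        _ = s^h := mul_one _
        _ ≤ T^h := h2
    have hstep : ∫ s in Set.Ioc s₀ T, Jf s ∂F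
        ≤ C₀ * ∫ s in Set.Ioc s₀ T, s^h * Real.exp (-(q*s)) ∂F := by
      have e1 : ∫ s in Set.Ioc s₀ T, Jf s ∂F
          ≤ ∫ s in Set.Ioc s₀ T, C₀ * (s^h * Real.exp (-(q*s))) ∂F :=
        MeasureTheory.setIntegral_mono_on hJfint.integrableOn (hφint.const_mul C₀)
          measurableSet_Ioc hpoint
      refine e1.trans_eq ?_
      exact MeasureTheory.integral_const_mul C₀ _
    have hmain := mono_piece_bound F hsupp hc₂ hβ1 hβ2 hs₀ hs₀T hq0 h hh hqT htail
    have hA : C₀ * s₀^h ≤ c₂ * X := by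
      have i1 : C₀ ≤ 2*(h:ℝ)*q^(h-1) := by
        rw [hC₀_def]
        exact div_le_self (by positivity) hfac1
      have e3 : C₀ * s₀^h ≤ (2*(h:ℝ)*q^(h-1)) * k := by
        calc C₀ * s₀^h ≤ (2*(h:ℝ)*q^(h-1)) * s₀^h :=
            mul_le_mul_of_nonneg_right i1 (pow_nonneg hs₀0.le h)
          _ ≤ (2*(h:ℝ)*q^(h-1)) * k := mul_le_mul_of_nonneg_left hks₀h (by positivity)
      refine e3.trans ?_
      have hsmall : (2*(h:ℝ)^2*k) * q^(h-3) ≤ 1 := by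
        refine hN _ _ (by positivity) ?_ (by omega)
        have a0 : (0:ℝ) ≤ (h:ℝ)^2 * ((h:ℝ) - 2) :=
          mul_nonneg (sq_nonneg _) (by linarith only [hh6])
        have a1 : 2*(h:ℝ)^2 ≤ (h:ℝ)^3 := by linarith only [a0]
        have i2 : 2*(h:ℝ)^2 ≤ k := le_trans a1 hkh3
        have i3 : (2*(h:ℝ)^2)*k ≤ k*k := mul_le_mul_of_nonneg_right i2 (by linarith only [hk1])
        have a2 : (0:ℝ) ≤ k*k*(k-1) :=
          mul_nonneg (mul_nonneg (by linarith only [hk1]) (by linarith only [hk1]))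
            (by linarith only [hk1])
        have i4 : k*k ≤ k^3 := by linarith only [a2]
        linarith only [i3, i4]
      have e5 : (2*(h:ℝ)*q^(h-1)) * k = ((2*(h:ℝ)^2*k)*q^(h-3)) * (q * (q/(h:ℝ))) := by
        have hqsplit : q^(h-1) = q^(h-3) * q * q := by
          rw [← pow_succ, ← pow_succ]; congr 1; omega
        rw [hqsplit]; field_simp
      rw [e5]
      calc ((2*(h:ℝ)^2*k)*q^(h-3)) * (q * (q/(h:ℝ))) ≤ 1 * (q*(q/(h:ℝ))) :=
          mul_le_mul_of_nonneg_right hsmall (by positivity)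
        _ = q * (q/(h:ℝ)) := one_mul _
        _ ≤ c₂ * (q/(h:ℝ)) := mul_le_mul_of_nonneg_right hqc₂ (by positivity)
        _ ≤ c₂ * X := mul_le_mul_of_nonneg_left hXq hc₂.le
    have hB : C₀ * (c₂*(h:ℝ)*T^((h:ℝ)-β)*Real.exp (-((h:ℝ)/2))) ≤ 100*(c₂*X) := by
      set E : ℝ := Real.exp (-((h:ℝ)/2)) with hE_def
      have hE0 : 0 < E := Real.exp_pos _
      have hTr : T ^ ((h:ℝ)-β) = ((h:ℝ)/2)^((h:ℝ)-β) * (q^((h:ℝ)-β))⁻¹ := by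
        have e0 : T = ((h:ℝ)/2)/q := by rw [hT_def]; ring
        rw [e0, Real.div_rpow (by positivity) hq0.le, div_eq_mul_inv]
      have hb1 : q^(h-1) * (q^((h:ℝ)-β))⁻¹ = q^(β-1) := by
        rw [← Real.rpow_natCast q (h-1), ← div_eq_mul_inv, ← Real.rpow_sub hq0]
        congr 1
        push_cast [Nat.cast_sub (show 1 ≤ h by omega)]
        ring
      have hb2 : q^(β-1) ≤ (h:ℝ) * X := by
        have e1 : q^(β-1) = (q/(h:ℝ))^(β-1) * (h:ℝ)^(β-1) := by
          rw [← Real.mul_rpow (by positivity) (by positivity)]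
          congr 1
          field_simp
        rw [e1]
        have e2 : (h:ℝ)^(β-1) ≤ (h:ℝ)^(1:ℝ) :=
          Real.rpow_le_rpow_of_exponent_le (by linarith) (by linarith)
        rw [Real.rpow_one] at e2
        calc (q/(h:ℝ))^(β-1) * (h:ℝ)^(β-1) ≤ (q/(h:ℝ))^(β-1) * (h:ℝ) :=
            mul_le_mul_of_nonneg_left e2 (Real.rpow_nonneg hqh0.le _)
          _ = (h:ℝ) * X := mul_comm _ _
      have hb3 : ((h:ℝ)/2)^((h:ℝ)-β) ≤ ((h:ℝ)/2)^(h-1) := by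
        have hcast : ((h-1:ℕ):ℝ) = (h:ℝ)-1 := by
          push_cast [Nat.cast_sub (show 1 ≤ h by omega)]; ring
        have e2 := Real.rpow_le_rpow_of_exponent_le (show (1:ℝ) ≤ (h:ℝ)/2 by linarith)
          (show (h:ℝ)-β ≤ ((h-1:ℕ):ℝ) by rw [hcast]; linarith)
        rwa [Real.rpow_natCast] at e2
      have e4 : C₀ * (c₂*(h:ℝ)*T^((h:ℝ)-β)*E)
          = (2*(h:ℝ)^2*c₂/(Nat.factorial h : ℝ)) * E * ((h:ℝ)/2)^((h:ℝ)-β)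
            * (q^(h-1) * (q^((h:ℝ)-β))⁻¹) := by
        rw [hC₀_def, hTr]; field_simp
      rw [e4, hb1]
      have c1 : (0:ℝ) ≤ (2*(h:ℝ)^2*c₂/(Nat.factorial h : ℝ)) * E := by positivity
      have e6 : (2*(h:ℝ)^2*c₂/(Nat.factorial h : ℝ)) * E * ((h:ℝ)/2)^((h:ℝ)-β) * q^(β-1)
          ≤ (2*(h:ℝ)^2*c₂/(Nat.factorial h : ℝ)) * E * ((h:ℝ)/2)^(h-1) * ((h:ℝ)*X) := by
        calc (2*(h:ℝ)^2*c₂/(Nat.factorial h : ℝ)) * E * ((h:ℝ)/2)^((h:ℝ)-β) * q^(β-1)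
            ≤ (2*(h:ℝ)^2*c₂/(Nat.factorial h : ℝ)) * E * ((h:ℝ)/2)^(h-1) * q^(β-1) :=
              mul_le_mul_of_nonneg_right (mul_le_mul_of_nonneg_left hb3 c1)
                (Real.rpow_nonneg hq0.le _)
          _ ≤ _ := by
              refine mul_le_mul_of_nonneg_left hb2 ?_
              positivity
      refine e6.trans ?_
      have e7 : (2*(h:ℝ)^2*c₂/(Nat.factorial h : ℝ)) * E * ((h:ℝ)/2)^(h-1) * ((h:ℝ)*X)
          = (4*(h:ℝ)^2 * (((h:ℝ)/2)^h / (Nat.factorial h : ℝ)) * E) * (c₂ * X) := by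
        have hp : ((h:ℝ)/2)^h = ((h:ℝ)/2)^(h-1) * ((h:ℝ)/2) := by
          rw [← pow_succ]; congr 1; omega
        rw [hp]; field_simp; ring
      rw [e7]
      refine mul_le_mul_of_nonneg_right ?_ (by positivity)
      have e8 : ((h:ℝ)/2)^h / (Nat.factorial h : ℝ) ≤ Real.exp (h:ℝ) / 2^h := by
        have hfe := Real.pow_div_factorial_le_exp (x := (h:ℝ)) (by positivity) h
        rw [div_pow]
        calc ((h:ℝ)^h/2^h) / (Nat.factorial h : ℝ)
            = ((h:ℝ)^h/(Nat.factorial h : ℝ))/2^h := by ring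
          _ ≤ Real.exp (h:ℝ)/2^h := by gcongr
      have e9 : 4*(h:ℝ)^2 * (((h:ℝ)/2)^h / (Nat.factorial h : ℝ)) * E
          ≤ 4*(h:ℝ)^2 * (Real.exp (h:ℝ)/2^h) * E :=
        mul_le_mul_of_nonneg_right (mul_le_mul_of_nonneg_left e8 (by positivity)) hE0.le
      refine e9.trans ?_
      have e10 : Real.exp (h:ℝ) * E = Real.exp ((h:ℝ)/2) := by
        rw [hE_def, ← Real.exp_add]; congr 1; ring
      have e11 : Real.exp ((h:ℝ)/2) = (Real.exp (1/2:ℝ))^h := by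
        rw [← Real.exp_nat_mul]; congr 1; ring
      have e12 : Real.exp (1/2:ℝ) ≤ 17/10 := exp_half_le_aux
      calc 4*(h:ℝ)^2 * (Real.exp (h:ℝ)/2^h) * E
          = 4*((h:ℝ)^2 * ((Real.exp (1/2:ℝ)/2)^h)) := by
            have e13 : (Real.exp (1/2:ℝ)/2)^h = (Real.exp (h:ℝ) * E)/2^h := by
              rw [div_pow, ← e11, e10]
            rw [e13]; ring
        _ ≤ 4*((h:ℝ)^2 * ((17/20:ℝ))^h) := by
            have hbase : Real.exp (1/2:ℝ)/2 ≤ 17/20 := by linarith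
            have hbase0 : (0:ℝ) ≤ Real.exp (1/2:ℝ)/2 := by positivity
            have hple := pow_le_pow_left₀ hbase0 hbase h
            have := mul_le_mul_of_nonneg_left hple (sq_nonneg ((h:ℝ)))
            linarith only [this]
        _ ≤ 4 * 25 := by linarith only [sq_mul_geom_le h hh]
        _ = 100 := by norm_num
    calc ∫ s in Set.Ioc s₀ T, Jf s ∂F
        ≤ C₀ * ∫ s in Set.Ioc s₀ T, s^h*Real.exp (-(q*s)) ∂F := hstep
      _ ≤ C₀ * (s₀^h + c₂*(h:ℝ)*T^((h:ℝ)-β)*Real.exp (-((h:ℝ)/2))) :=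
          mul_le_mul_of_nonneg_left hmain hC₀0
      _ = C₀ * s₀^h + C₀ * (c₂*(h:ℝ)*T^((h:ℝ)-β)*Real.exp (-((h:ℝ)/2))) := by ring
      _ ≤ c₂*X + 100*(c₂*X) := add_le_add hA hB
  -- ------------------------------------------------------------------ assemble
  calc ∫ s, Jf s ∂F
      = (∫ s in Set.Icc 0 s₀, Jf s ∂F + ∫ s in Set.Ioc s₀ T, Jf s ∂F)
        + ∫ s in Set.Ioi T, Jf s ∂F := hsplit
    _ ≤ (c₂*X + (c₂*X + 100*(c₂*X))) + (c₂*X + 2*d*(c₂*X)) :=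
        add_le_add (add_le_add hT1 hT2) hT3
    _ = (103 + 2*d) * (c₂*X) := by ring
    _ ≤ (55*d) * (c₂*X) := mul_le_mul_of_nonneg_right (by linarith) (by positivity)
    _ = 55*d*c₂*X := by ring
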